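/- Let A be a real p×m matrix, V a p×p positive definite matrix, b ∈ ℝ^p, φ : ℝ^n → ℝ^m a function, and g_j : ℝ^n → ℝ, h_j : ℝ^n → ℝ for j = 1, …, s. Suppose ξ_c ∈ ℝ, ξ_l ∈ ℝ^m, and a symmetric m×m matrix ξ_Q satisfy ξ_c + 2 ξ_lᵀ φ(x) + φ(x)ᵀ ξ_Q φ(x) = Σ_{j=1}^{s} h_j(x) g_j(x) for all x ∈ ℝ^n. Assume S := Aᵀ V⁻¹ A + ξ_Q is positive definite and there exists x̂ ∈ ℝ^n with φ(x̂) = S⁻¹ (Aᵀ V⁻¹ b − ξ_l). Then for every x ∈ ℝ^n satisfying g_j(x) = 0 for all j, one has ‖A φ(x) − b‖²_{V⁻¹} = ‖φ(x) − φ(x̂)‖²_S + ρ̂, where ρ̂ := bᵀ V⁻¹ b + ξ_c − (Aᵀ V⁻¹ b − ξ_l)ᵀ S⁻¹ (Aᵀ V⁻¹ b − ξ_l). -/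

import Mathlib

open Matrix

lemma dot_mulVec_comm {k : ℕ} (M : Matrix (Fin k) (Fin k) ℝ) (hM : Mᵀ = M)
    (u w : Fin k → ℝ) : u ⬝ᵥ M.mulVec w = w ⬝ᵥ M.mulVec u := by
  rw [Matrix.dotProduct_mulVec, ← Matrix.mulVec_transpose, hM, dotProduct_comm]

lemma mulVec_dot' {k l : ℕ} (A : Matrix (Fin k) (Fin l) ℝ) (u : Fin l → ℝ)
    (z : Fin k → ℝ) : A.mulVec u ⬝ᵥ z = u ⬝ᵥ Aᵀ.mulVec z := by
  rw [dotProduct_comm, Matrix.dotProduct_mulVec, ← Matrix.mulVec_transpose,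
    dotProduct_comm]

lemma posdef_transpose_eq {k : ℕ} (M : Matrix (Fin k) (Fin k) ℝ) (h : M.PosDef) :
    Mᵀ = M := by
  have hH := h.isHermitian
  rwa [Matrix.IsHermitian, Matrix.conjTranspose_eq_transpose_of_trivial] at hH

theorem bpue_sos_belief_constrained {p m n s : ℕ}
    (A : Matrix (Fin p) (Fin m) ℝ) (V : Matrix (Fin p) (Fin p) ℝ) (b : Fin p → ℝ)
    (φ : (Fin n → ℝ) → (Fin m → ℝ))
    (g h : Fin s → (Fin n → ℝ) → ℝ)
    (hV : V.PosDef)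
    (ξc : ℝ) (ξl : Fin m → ℝ) (ξQ : Matrix (Fin m) (Fin m) ℝ) (hξQ : ξQ.IsSymm)
    (hpoly : ∀ x : Fin n → ℝ,
      ξc + 2 * (ξl ⬝ᵥ φ x) + φ x ⬝ᵥ ξQ.mulVec (φ x) = ∑ j, h j x * g j x)
    (S : Matrix (Fin m) (Fin m) ℝ) (hS : S = Aᵀ * V⁻¹ * A + ξQ)
    (hSpd : S.PosDef)
    (xh : Fin n → ℝ)
    (hxh : φ xh = S⁻¹.mulVec ((Aᵀ * V⁻¹).mulVec b - ξl))
    (rh : ℝ)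
    (hrh : rh = b ⬝ᵥ V⁻¹.mulVec b + ξc -
      ((Aᵀ * V⁻¹).mulVec b - ξl) ⬝ᵥ S⁻¹.mulVec ((Aᵀ * V⁻¹).mulVec b - ξl)) :
    ∀ x : Fin n → ℝ, (∀ j, g j x = 0) →
      (A.mulVec (φ x) - b) ⬝ᵥ V⁻¹.mulVec (A.mulVec (φ x) - b) =
        (φ x - φ xh) ⬝ᵥ S.mulVec (φ x - φ xh) + rh := by
  intro x hg
  set u := φ x with hu
  set w := φ xh with hw
  set c : Fin m → ℝ := (Aᵀ * V⁻¹).mulVec b - ξl with hc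
  have hWsymm : (V⁻¹)ᵀ = V⁻¹ := posdef_transpose_eq _ hV.inv
  have hSsymm : Sᵀ = S := posdef_transpose_eq _ hSpd
  -- constraint: the correction polynomial vanishes at x
  have hzero : ξc + 2 * (ξl ⬝ᵥ u) + u ⬝ᵥ ξQ.mulVec u = 0 := by
    rw [hu, hpoly x]
    exact Finset.sum_eq_zero fun j _ => by rw [hg j, mul_zero]
  -- S w = c
  have hSw : S.mulVec w = c := by
    rw [show S.mulVec w = S.mulVec (S⁻¹.mulVec c) from by rw [← hxh], Matrix.mulVec_mulVec,
      Matrix.mul_nonsing_inv _ (Matrix.isUnit_iff_isUnit_det _ |>.1 hSpd.isUnit),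
      Matrix.one_mulVec]
  -- useful scalar identities
  have h1 : u ⬝ᵥ S.mulVec w = u ⬝ᵥ c := by rw [hSw]
  have h2 : w ⬝ᵥ S.mulVec u = u ⬝ᵥ c := by rw [dot_mulVec_comm S hSsymm, hSw]
  have h3 : w ⬝ᵥ S.mulVec w = c ⬝ᵥ S⁻¹.mulVec c := by
    rw [hSw, dotProduct_comm, hxh]
  have h4 : u ⬝ᵥ S.mulVec u
      = u ⬝ᵥ (Aᵀ * V⁻¹ * A).mulVec u + u ⬝ᵥ ξQ.mulVec u := by
    rw [hS, Matrix.add_mulVec, dotProduct_add]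
  have h5 : u ⬝ᵥ c = u ⬝ᵥ (Aᵀ * V⁻¹).mulVec b - ξl ⬝ᵥ u := by
    rw [hc, dotProduct_sub, dotProduct_comm u ξl]
  -- expand LHS
  have hL1 : A.mulVec u ⬝ᵥ V⁻¹.mulVec (A.mulVec u) = u ⬝ᵥ (Aᵀ * V⁻¹ * A).mulVec u := by
    rw [mulVec_dot', Matrix.mulVec_mulVec, ← Matrix.mulVec_mulVec, ← Matrix.mulVec_mulVec,
      Matrix.mulVec_mulVec, Matrix.mulVec_mulVec]
  have hL2 : A.mulVec u ⬝ᵥ V⁻¹.mulVec b = u ⬝ᵥ (Aᵀ * V⁻¹).mulVec b := by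
    rw [mulVec_dot', Matrix.mulVec_mulVec]
  have hL3 : b ⬝ᵥ V⁻¹.mulVec (A.mulVec u) = u ⬝ᵥ (Aᵀ * V⁻¹).mulVec b := by
    rw [dot_mulVec_comm _ hWsymm, hL2]
  simp only [Matrix.mulVec_sub, sub_dotProduct, dotProduct_sub]
  rw [hL1, hL2, hL3, h1, h2, h3, h4, hrh]
  linarith [hzero, h5]
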